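/- (Regime D equilibria) For b = 3, the set of fixed points of the update map t_3 is exactly {0, 23, 29, 31, 43, 46, 47, 53, 55, 58, 59, 61, 62, 63}; i.e. the equilibria are pure defection, pure cooperation, the six "L-shape" states (exactly two adjacent cells in one row defect), and the six single-defector states 31, 47, 55, 59, 61, 62. -/
import Mathlib


/-- Von Neumann neighbourhoods on the 2×3 toroidal lattice.
Index `i : Fin 6` represents cell `i+1`, so `N(1)={2,3,5}` becomes `nbrs 0 = {1,2,4}`, etc. -/
def nbrs : Fin 6 → Finset (Fin 6)
  | 0 => {1, 2, 4}
  | 1 => {0, 3, 5}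
  | 2 => {0, 3, 4}
  | 3 => {1, 2, 5}
  | 4 => {0, 2, 5}
  | 5 => {1, 3, 4}

lemma nbrs_nonempty (i : Fin 6) : (nbrs i).Nonempty := by
  fin_cases i <;> simp [nbrs]

/-- Pairwise payoff to the first argument; `true` = cooperate, `false` = defect. -/
def pay (b : ℝ) : Bool → Bool → ℝ
  | false, false => 1
  | false, true  => b
  | true,  false => 0
  | true,  true  => 3

/-- Net payoff of cell `i` in state `σ`. -/
def payoff (b : ℝ) (σ : Fin 6 → Bool) (i : Fin 6) : ℝ :=
  ∑ j ∈ nbrs i, pay b (σ i) (σ j)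

/- Synchronous update map `t_b` on states: if the best payoff `m` among the
neighbours of cell `i` satisfies `m ≤ P_b(σ,i)` the cell keeps its strategy;
otherwise it cooperates iff some maximally-paid neighbour cooperates. -/
open scoped Classical in
noncomputable def update (b : ℝ) (σ : Fin 6 → Bool) : Fin 6 → Bool := fun i =>
  let m := (nbrs i).sup' (nbrs_nonempty i) fun j => payoff b σ j
  if m ≤ payoff b σ i then σ i
  else if ∃ j ∈ nbrs i, payoff b σ j = m ∧ σ j = true then true else false

/-- Decode an integer `0 ≤ n < 64` into a state: cell 1 is the most significant bit,
bit value 1 = cooperate. -/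
def dec (n : ℕ) : Fin 6 → Bool := fun i => n.testBit (5 - i.val)

/-- Encode a state as an integer via `n = Σ β(i)·2^(6−i)`. -/
def enc (σ : Fin 6 → Bool) : ℕ := ∑ i : Fin 6, if σ i then 2 ^ (5 - i.val) else 0

/-- The update map `t_b` acting on integer-coded states. -/
noncomputable def T (b : ℝ) (n : ℕ) : ℕ := enc (update b (dec n))


-- computable mirror of the dynamics at b = 3
def payN : Bool → Bool → ℕ
  | false, false => 1
  | false, true  => 3
  | true,  false => 0
  | true,  true  => 3

def payoffN (σ : Fin 6 → Bool) (i : Fin 6) : ℕ := ∑ j ∈ nbrs i, payN (σ i) (σ j)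

def updateN (σ : Fin 6 → Bool) : Fin 6 → Bool := fun i =>
  let m := (nbrs i).sup' (nbrs_nonempty i) fun j => payoffN σ j
  if m ≤ payoffN σ i then σ i
  else if ∃ j ∈ nbrs i, payoffN σ j = m ∧ σ j = true then true else false

def TN (n : ℕ) : ℕ := enc (updateN (dec n))

lemma pay_cast (x y : Bool) : (payN x y : ℝ) = pay 3 x y := by
  cases x <;> cases y <;> simp [payN, pay]

lemma payoff_cast (σ : Fin 6 → Bool) (i : Fin 6) :
    (payoffN σ i : ℝ) = payoff 3 σ i := by
  simp [payoffN, payoff, Nat.cast_sum, pay_cast]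

lemma sup_cast (σ : Fin 6 → Bool) (i : Fin 6) :
    (((nbrs i).sup' (nbrs_nonempty i) fun j => payoffN σ j : ℕ) : ℝ)
      = (nbrs i).sup' (nbrs_nonempty i) fun j => payoff 3 σ j := by
  rw [Finset.comp_sup'_eq_sup'_comp (nbrs_nonempty i) (Nat.cast : ℕ → ℝ)
    (fun x y => by simp [Nat.cast_max])]
  simp [Function.comp, payoff_cast]

lemma update_eq (σ : Fin 6 → Bool) : update 3 σ = updateN σ := by
  funext i
  simp only [update, updateN]
  rw [← sup_cast, ← payoff_cast]
  have hle : ((((nbrs i).sup' (nbrs_nonempty i) fun j => payoffN σ j : ℕ) : ℝ) ≤ (payoffN σ i : ℝ)) ↔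
      (((nbrs i).sup' (nbrs_nonempty i) fun j => payoffN σ j) ≤ payoffN σ i) := Nat.cast_le
  have hex : (∃ j ∈ nbrs i, payoff 3 σ j =
      (((nbrs i).sup' (nbrs_nonempty i) fun j => payoffN σ j : ℕ) : ℝ) ∧ σ j = true) ↔
      (∃ j ∈ nbrs i, payoffN σ j = ((nbrs i).sup' (nbrs_nonempty i) fun j => payoffN σ j) ∧ σ j = true) := by
    constructor <;> rintro ⟨j, hj, h1, h2⟩ <;> refine ⟨j, hj, ?_, h2⟩
    · exact_mod_cast (payoff_cast σ j) ▸ h1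
    · rw [← payoff_cast, h1]
  simp only [hle, hex]

lemma T_eq (n : ℕ) : T 3 n = TN n := by rw [T, TN, update_eq]

theorem stmt11 : (Finset.range 64).filter (fun n => T 3 n = n)
    = ({0, 23, 29, 31, 43, 46, 47, 53, 55, 58, 59, 61, 62, 63} : Finset ℕ) := by
  have h : (Finset.range 64).filter (fun n => T 3 n = n)
      = (Finset.range 64).filter (fun n => TN n = n) := by
    apply Finset.filter_congr
    intro n _
    simp [T_eq]
  rw [h]
  decide
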